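/- For every n ≥ 2, every k ∈ {1,…,n}, and every polynomial f ∈ ℂ[z₁,…,zₙ] with ∂f/∂zₖ = 0, the shear field f ∂/∂zₖ belongs to the smallest Lie subalgebra of the derivations of ℂ[z₁,…,zₙ] containing U, V′ and V″. -/

import Mathlib

open MvPolynomial

/-- The polynomial vector field `f ∂/∂zₖ`: the derivation of `ℂ[z₁,…,zₙ]`
sending the coordinate `zₖ` to `f` and all other coordinates to `0`. -/
noncomputable def der (n : ℕ) (f : MvPolynomial (Fin n) ℂ) (k : Fin n) :
    Derivation ℂ (MvPolynomial (Fin n) ℂ) (MvPolynomial (Fin n) ℂ) :=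
  MvPolynomial.mkDerivation ℂ (Pi.single k f)

/-- `U = ∂/∂zₙ`  (coordinates are `0`-indexed: `zₖ = X ⟨k-1,_⟩`). -/
noncomputable def U (n : ℕ) :
    Derivation ℂ (MvPolynomial (Fin n) ℂ) (MvPolynomial (Fin n) ℂ) :=
  MvPolynomial.mkDerivation ℂ (fun i => if (i : ℕ) = n - 1 then 1 else 0)

/-- `V′ = ∂/∂zₙ + zₙ⁵ ∂/∂z_{n−1} + zₙ² z_{n−1}⁵ ∂/∂z_{n−2} + ⋯ + zₙ² z_{n−1}² ⋯ z₃² z₂⁵ ∂/∂z₁`,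
i.e. `V′(zₙ) = 1` and `V′(zₖ) = zₙ² z_{n−1}² ⋯ z_{k+2}² · z_{k+1}⁵` for `1 ≤ k ≤ n−1`. -/
noncomputable def V' (n : ℕ) :
    Derivation ℂ (MvPolynomial (Fin n) ℂ) (MvPolynomial (Fin n) ℂ) :=
  MvPolynomial.mkDerivation ℂ (fun i =>
    if h : (i : ℕ) + 1 < n then
      (∏ j ∈ Finset.univ.filter (fun j : Fin n => (i : ℕ) + 1 < (j : ℕ)), (X j) ^ 2) *
        (X (⟨(i : ℕ) + 1, h⟩ : Fin n)) ^ 5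
    else 1)

/-- `V″ = ∂/∂z₁ + z₁⁵ ∂/∂z₂ + z₁² z₂⁵ ∂/∂z₃ + ⋯ + z₁² z₂² ⋯ z_{n−2}² z_{n−1}⁵ ∂/∂zₙ`,
i.e. `V″(z₁) = 1` and `V″(zₖ) = z₁² z₂² ⋯ z_{k−2}² · z_{k−1}⁵` for `2 ≤ k ≤ n`. -/
noncomputable def V'' (n : ℕ) :
    Derivation ℂ (MvPolynomial (Fin n) ℂ) (MvPolynomial (Fin n) ℂ) :=
  MvPolynomial.mkDerivation ℂ (fun i =>
    if h : 0 < (i : ℕ) then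
      (∏ j ∈ Finset.univ.filter (fun j : Fin n => (j : ℕ) < (i : ℕ) - 1), (X j) ^ 2) *
        (X (⟨(i : ℕ) - 1, lt_of_le_of_lt (Nat.sub_le _ _) i.isLt⟩ : Fin n)) ^ 5
    else 1)

namespace ShearGen

noncomputable def G (n : ℕ) :
    LieSubalgebra ℂ (Derivation ℂ (MvPolynomial (Fin n) ℂ) (MvPolynomial (Fin n) ℂ)) :=
  LieSubalgebra.lieSpan ℂ _ {U n, V' n, V'' n}

variable {n : ℕ}

lemma der_eq_smul (f : MvPolynomial (Fin n) ℂ) (k : Fin n) :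
    der n f k = f • (pderiv k : Derivation ℂ (MvPolynomial (Fin n) ℂ) (MvPolynomial (Fin n) ℂ)) := by
  apply derivation_ext
  intro i
  rw [der, mkDerivation_X, Derivation.smul_apply]
  by_cases h : i = k
  · subst h; simp [Pi.single_apply]
  · simp [Pi.single_apply, h, pderiv_X_of_ne (Ne.symm h)]

lemma der_apply (f : MvPolynomial (Fin n) ℂ) (k : Fin n) (p : MvPolynomial (Fin n) ℂ) :
    der n f k p = f * pderiv k p := by
  rw [der_eq_smul]; rfl

lemma der_X (f : MvPolynomial (Fin n) ℂ) (k i : Fin n) :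
    der n f k (X i) = if i = k then f else 0 := by
  rw [der, mkDerivation_X, Pi.single_apply]

lemma der_add (f g : MvPolynomial (Fin n) ℂ) (k : Fin n) :
    der n (f + g) k = der n f k + der n g k := by
  simp [der_eq_smul, add_smul]

lemma der_smul (c : ℂ) (f : MvPolynomial (Fin n) ℂ) (k : Fin n) :
    der n (c • f) k = c • der n f k := by
  simp [der_eq_smul, smul_assoc]

lemma der_zero (k : Fin n) : der n 0 k = 0 := by
  simp [der_eq_smul]

lemma bracket_der (f g : MvPolynomial (Fin n) ℂ) (k l : Fin n) :
    ⁅der n f k, der n g l⁆ =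
      der n (f * pderiv k g) l - der n (g * pderiv l f) k := by
  apply derivation_ext
  intro i
  have h1 : der n f k (der n g l (X i)) = if i = l then f * pderiv k g else 0 := by
    rw [der_X]; split <;> simp [der_apply]
  have h2 : der n g l (der n f k (X i)) = if i = k then g * pderiv l f else 0 := by
    rw [der_X]; split <;> simp [der_apply]
  rw [Derivation.commutator_apply, h1, h2, Derivation.sub_apply, der_X, der_X]

lemma mem_of_smul_mem (c : ℂ) (hc : c ≠ 0)
    {D : Derivation ℂ (MvPolynomial (Fin n) ℂ) (MvPolynomial (Fin n) ℂ)}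
    (h : c • D ∈ G n) : D ∈ G n := by
  have h2 := (G n).smul_mem c⁻¹ h
  rwa [smul_smul, inv_mul_cancel₀ hc, one_smul] at h2

lemma U_mem : U n ∈ G n := LieSubalgebra.subset_lieSpan (by simp)
lemma V'_mem : V' n ∈ G n := LieSubalgebra.subset_lieSpan (by simp)
lemma V''_mem : V'' n ∈ G n := LieSubalgebra.subset_lieSpan (by simp)

lemma pderiv_prod_pow (k : Fin n) (s : Finset (Fin n)) (e : Fin n → ℕ) (hk : k ∉ s) :
    pderiv k (∏ j ∈ s, (X j : MvPolynomial (Fin n) ℂ) ^ e j) = 0 := by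
  classical
  induction s using Finset.induction_on with
  | empty => simp
  | @insert j s' hj ih =>
      rw [Finset.prod_insert hj, pderiv_mul,
        ih (fun hs => hk (Finset.mem_insert_of_mem hs)), pderiv_pow,
        pderiv_X_of_ne (fun hjk : j = k => hk (hjk ▸ Finset.mem_insert_self j s'))]
      ring

lemma pderiv_natCast_mul (t : Fin n) (m : ℕ) (p : MvPolynomial (Fin n) ℂ) :
    pderiv t ((m : MvPolynomial (Fin n) ℂ) * p) = (m : MvPolynomial (Fin n) ℂ) * pderiv t p := by
  have hc : ∀ q : MvPolynomial (Fin n) ℂ, ((m : ℂ) • q) = (m : MvPolynomial (Fin n) ℂ) * q := by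
    intro q; rw [smul_eq_C_mul, map_natCast]
  rw [← hc p, Derivation.map_smul, hc]

lemma pd_mul_pow (t : Fin n) (g : MvPolynomial (Fin n) ℂ) (hg : pderiv t g = 0) (m : ℕ) :
    pderiv t (g * X t ^ m) = (m : MvPolynomial (Fin n) ℂ) * (g * X t ^ (m - 1)) := by
  rw [pderiv_mul, hg, pderiv_pow, pderiv_X_self]; ring

lemma pd_iter (t : Fin n) (g : MvPolynomial (Fin n) ℂ) (hg : pderiv t g = 0) (N m : ℕ) :
    (fun p => pderiv t p)^[m] (g * X t ^ N) =
      (N.descFactorial m : MvPolynomial (Fin n) ℂ) * (g * X t ^ (N - m)) := by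
  induction m with
  | zero => simp
  | succ m ih =>
      rw [Function.iterate_succ_apply', ih, pderiv_natCast_mul, pd_mul_pow t g hg,
        Nat.descFactorial_succ, Nat.cast_mul, Nat.sub_sub]
      ring

lemma iter_zero_of_pd_zero (t : Fin n) (p : MvPolynomial (Fin n) ℂ) (hp : pderiv t p = 0)
    (m : ℕ) (hm : 1 ≤ m) : (fun q => pderiv t q)^[m] p = 0 := by
  obtain ⟨r, rfl⟩ := Nat.exists_eq_add_of_le hm
  rw [add_comm, Function.iterate_succ_apply]
  simp only [hp]
  exact Function.iterate_fixed (by simp) r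

lemma bracket_one_mk (j : Fin n) (w : Fin n → MvPolynomial (Fin n) ℂ) :
    ⁅der n 1 j, mkDerivation ℂ w⁆ = mkDerivation ℂ (fun i => pderiv j (w i)) := by
  apply derivation_ext
  intro i
  have h2 : mkDerivation ℂ w (der n 1 j (X i)) = 0 := by
    rw [der_X]
    split
    · exact Derivation.map_one_eq_zero _
    · exact map_zero _
  rw [Derivation.commutator_apply, h2, sub_zero, mkDerivation_X, mkDerivation_X, der_apply,
    one_mul]

lemma iter_mk_mem (j : Fin n) (hj : der n 1 j ∈ G n) (w : Fin n → MvPolynomial (Fin n) ℂ)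
    (hw : mkDerivation ℂ w ∈ G n) (m : ℕ) :
    mkDerivation ℂ (fun i => (fun q => pderiv j q)^[m] (w i)) ∈ G n := by
  induction m with
  | zero => simpa using hw
  | succ m ih =>
      have h3 := (G n).lie_mem hj ih
      rw [bracket_one_mk] at h3
      have h4 : (fun i => pderiv j ((fun q => pderiv j q)^[m] (w i)))
          = fun i => (fun q => pderiv j q)^[m+1] (w i) := by
        funext i; rw [Function.iterate_succ_apply']
      rwa [h4] at h3

lemma seed_V' (k : Fin n) (hk : (k:ℕ)+1 < n) (e : ℕ) (he : e ≤ 2)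
    (hpd : ∀ j : Fin n, (k:ℕ) < (j:ℕ) → der n 1 j ∈ G n) :
    der n ((∏ j ∈ Finset.univ.filter (fun j : Fin n => (k:ℕ)+1 < (j:ℕ)),
        (X j : MvPolynomial (Fin n) ℂ)^2) * X (⟨(k:ℕ)+1, hk⟩ : Fin n) ^ e) k ∈ G n := by
  classical
  set j1 : Fin n := ⟨(k:ℕ)+1, hk⟩ with hj1
  set w : Fin n → MvPolynomial (Fin n) ℂ := fun i =>
    if h : (i : ℕ) + 1 < n then
      (∏ j ∈ Finset.univ.filter (fun j : Fin n => (i : ℕ) + 1 < (j : ℕ)), (X j) ^ 2) *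
        (X (⟨(i : ℕ) + 1, h⟩ : Fin n)) ^ 5
    else 1 with hwdef
  have hV : V' n = mkDerivation ℂ w := rfl
  have hmem : mkDerivation ℂ (fun i => (fun q => pderiv j1 q)^[5-e] (w i)) ∈ G n :=
    iter_mk_mem j1 (hpd j1 (Nat.lt_succ_self _)) w (hV ▸ V'_mem) (5-e)
  set c : ℕ := Nat.descFactorial 5 (5-e) with hc
  set P : MvPolynomial (Fin n) ℂ :=
    ∏ j ∈ Finset.univ.filter (fun j : Fin n => (k:ℕ)+1 < (j:ℕ)), (X j)^2 with hP
  have key : (fun i => (fun q => pderiv j1 q)^[5-e] (w i)) =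
      Pi.single k ((c : MvPolynomial (Fin n) ℂ) * (P * X j1 ^ e)) := by
    funext i
    rw [Pi.single_apply]
    by_cases hik : i = k
    · rw [if_pos hik]
      subst hik
      simp only [hwdef]
      rw [dif_pos hk]
      have hg : pderiv j1 P = 0 := by
        apply pderiv_prod_pow
        simp
        have hv : (j1:ℕ) = (i:ℕ)+1 := rfl
        omega
      have h5 : (X (⟨(i:ℕ)+1, hk⟩ : Fin n) : MvPolynomial (Fin n) ℂ) = X j1 := rfl
      rw [← hP, h5, pd_iter j1 P hg 5 (5-e), Nat.sub_sub_self (by omega : e ≤ 5)]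
    · rw [if_neg hik]
      by_cases hin : (i:ℕ) + 1 < n
      · simp only [hwdef]
        rw [dif_pos hin]
        by_cases hik2 : (i:ℕ) < (k:ℕ)
        · have hj1mem : j1 ∈ Finset.univ.filter (fun j : Fin n => (i : ℕ) + 1 < (j : ℕ)) := by
            simp [hj1]; omega
          rw [← Finset.mul_prod_erase _ _ hj1mem]
          have hre : (X j1:MvPolynomial (Fin n) ℂ)^2 *
              (∏ j ∈ (Finset.univ.filter (fun j : Fin n => (i : ℕ) + 1 < (j : ℕ))).erase j1,
                (X j)^2) * (X (⟨(i:ℕ)+1, hin⟩ : Fin n))^5 =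
              ((∏ j ∈ (Finset.univ.filter (fun j : Fin n => (i : ℕ) + 1 < (j : ℕ))).erase j1,
                (X j)^2) * (X (⟨(i:ℕ)+1, hin⟩ : Fin n))^5) * (X j1)^2 := by ring
          rw [hre]
          have hg2 : pderiv j1 ((∏ j ∈ (Finset.univ.filter
              (fun j : Fin n => (i : ℕ) + 1 < (j : ℕ))).erase j1, (X j:MvPolynomial (Fin n) ℂ)^2) *
              (X (⟨(i:ℕ)+1, hin⟩ : Fin n))^5) = 0 := by
            rw [pderiv_mul, pderiv_prod_pow _ _ _ (Finset.notMem_erase _ _), pderiv_pow,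
              pderiv_X_of_ne (by simp [hj1]; omega)]
            ring
          rw [pd_iter j1 _ hg2 2 (5-e)]
          have : Nat.descFactorial 2 (5-e) = 0 := by
            rw [Nat.descFactorial_eq_zero_iff_lt]; omega
          rw [this, Nat.cast_zero, zero_mul]
        · refine iter_zero_of_pd_zero _ _ ?_ _ (by omega)
          rw [pderiv_mul, pderiv_prod_pow, pderiv_pow,
            pderiv_X_of_ne (by simp [hj1]; omega)]
          · ring
          · simp only [Finset.mem_filter]
            rintro ⟨-, hlt⟩
            simp [hj1] at hlt
            omega
      · simp only [hwdef]
        rw [dif_neg hin]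
        exact iter_zero_of_pd_zero _ _ pderiv_one _ (by omega)
  rw [key] at hmem
  have : mkDerivation ℂ (Pi.single k ((c : MvPolynomial (Fin n) ℂ) * (P * X j1 ^ e)))
      = der n ((c : MvPolynomial (Fin n) ℂ) * (P * X j1 ^ e)) k := rfl
  rw [this] at hmem
  have hcast : ((c : MvPolynomial (Fin n) ℂ) * (P * X j1 ^ e)) = (c : ℂ) • (P * X j1 ^ e) := by
    rw [smul_eq_C_mul, map_natCast]
  rw [hcast, der_smul] at hmem
  exact mem_of_smul_mem (c:ℂ) (by
    have : c ≠ 0 := by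
      rw [hc, Ne, Nat.descFactorial_eq_zero_iff_lt]
      omega
    exact_mod_cast this) hmem

lemma seed_V'' (k : Fin n) (hk0 : 0 < (k:ℕ)) (e : ℕ) (he : e ≤ 2)
    (hpd : ∀ j : Fin n, (j:ℕ) < (k:ℕ) → der n 1 j ∈ G n) :
    der n ((∏ j ∈ Finset.univ.filter (fun j : Fin n => (j:ℕ) < (k:ℕ)-1),
        (X j : MvPolynomial (Fin n) ℂ)^2) *
        X (⟨(k:ℕ)-1, lt_of_le_of_lt (Nat.sub_le _ _) k.isLt⟩ : Fin n) ^ e) k ∈ G n := by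
  classical
  set j1 : Fin n := ⟨(k:ℕ)-1, lt_of_le_of_lt (Nat.sub_le _ _) k.isLt⟩ with hj1
  set w : Fin n → MvPolynomial (Fin n) ℂ := fun i =>
    if h : 0 < (i : ℕ) then
      (∏ j ∈ Finset.univ.filter (fun j : Fin n => (j : ℕ) < (i : ℕ) - 1), (X j) ^ 2) *
        (X (⟨(i : ℕ) - 1, lt_of_le_of_lt (Nat.sub_le _ _) i.isLt⟩ : Fin n)) ^ 5
    else 1 with hwdef
  have hV : V'' n = mkDerivation ℂ w := rfl
  have hmem : mkDerivation ℂ (fun i => (fun q => pderiv j1 q)^[5-e] (w i)) ∈ G n :=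
    iter_mk_mem j1 (hpd j1 (by simp [hj1]; omega)) w (hV ▸ V''_mem) (5-e)
  set c : ℕ := Nat.descFactorial 5 (5-e) with hc
  set P : MvPolynomial (Fin n) ℂ :=
    ∏ j ∈ Finset.univ.filter (fun j : Fin n => (j:ℕ) < (k:ℕ)-1), (X j)^2 with hP
  have key : (fun i => (fun q => pderiv j1 q)^[5-e] (w i)) =
      Pi.single k ((c : MvPolynomial (Fin n) ℂ) * (P * X j1 ^ e)) := by
    funext i
    rw [Pi.single_apply]
    by_cases hik : i = k
    · rw [if_pos hik]
      subst hik
      simp only [hwdef]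
      rw [dif_pos hk0]
      have hg : pderiv j1 P = 0 := by
        apply pderiv_prod_pow
        simp
        have hv : (j1:ℕ) = (i:ℕ)-1 := rfl
        omega
      have h5 : (X (⟨(i:ℕ)-1, lt_of_le_of_lt (Nat.sub_le _ _) i.isLt⟩ : Fin n) :
          MvPolynomial (Fin n) ℂ) = X j1 := rfl
      rw [← hP, h5, pd_iter j1 P hg 5 (5-e), Nat.sub_sub_self (by omega : e ≤ 5)]
    · rw [if_neg hik]
      have hikv : (i:ℕ) ≠ (k:ℕ) := fun hv => hik (Fin.ext hv)
      by_cases hin : 0 < (i:ℕ)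
      · simp only [hwdef]
        rw [dif_pos hin]
        by_cases hik2 : (k:ℕ) < (i:ℕ)
        · have hj1mem : j1 ∈ Finset.univ.filter (fun j : Fin n => (j : ℕ) < (i : ℕ) - 1) := by
            simp [hj1]; omega
          rw [← Finset.mul_prod_erase _ _ hj1mem]
          have hre : (X j1:MvPolynomial (Fin n) ℂ)^2 *
              (∏ j ∈ (Finset.univ.filter (fun j : Fin n => (j : ℕ) < (i : ℕ) - 1)).erase j1,
                (X j)^2) *
              (X (⟨(i:ℕ)-1, lt_of_le_of_lt (Nat.sub_le _ _) i.isLt⟩ : Fin n))^5 =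
              ((∏ j ∈ (Finset.univ.filter (fun j : Fin n => (j : ℕ) < (i : ℕ) - 1)).erase j1,
                (X j)^2) *
              (X (⟨(i:ℕ)-1, lt_of_le_of_lt (Nat.sub_le _ _) i.isLt⟩ : Fin n))^5) * (X j1)^2 := by
            ring
          rw [hre]
          have hg2 : pderiv j1 ((∏ j ∈ (Finset.univ.filter
              (fun j : Fin n => (j : ℕ) < (i : ℕ) - 1)).erase j1,
                (X j:MvPolynomial (Fin n) ℂ)^2) *
              (X (⟨(i:ℕ)-1, lt_of_le_of_lt (Nat.sub_le _ _) i.isLt⟩ : Fin n))^5) = 0 := by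
            rw [pderiv_mul, pderiv_prod_pow _ _ _ (Finset.notMem_erase _ _), pderiv_pow,
              pderiv_X_of_ne (by simp [hj1]; omega)]
            ring
          rw [pd_iter j1 _ hg2 2 (5-e)]
          have : Nat.descFactorial 2 (5-e) = 0 := by
            rw [Nat.descFactorial_eq_zero_iff_lt]; omega
          rw [this, Nat.cast_zero, zero_mul]
        · refine iter_zero_of_pd_zero _ _ ?_ _ (by omega)
          rw [pderiv_mul, pderiv_prod_pow, pderiv_pow,
            pderiv_X_of_ne (by simp [hj1]; omega)]
          · ring
          · simp only [Finset.mem_filter]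
            rintro ⟨-, hlt⟩
            have hj1v : (j1:ℕ) = (k:ℕ)-1 := rfl
            omega
      · simp only [hwdef]
        rw [dif_neg hin]
        exact iter_zero_of_pd_zero _ _ pderiv_one _ (by omega)
  rw [key] at hmem
  have hmk : mkDerivation ℂ (Pi.single k ((c : MvPolynomial (Fin n) ℂ) * (P * X j1 ^ e)))
      = der n ((c : MvPolynomial (Fin n) ℂ) * (P * X j1 ^ e)) k := rfl
  rw [hmk] at hmem
  have hcast : ((c : MvPolynomial (Fin n) ℂ) * (P * X j1 ^ e)) = (c : ℂ) • (P * X j1 ^ e) := by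
    rw [smul_eq_C_mul, map_natCast]
  rw [hcast, der_smul] at hmem
  exact mem_of_smul_mem (c:ℂ) (by
    have : c ≠ 0 := by
      rw [hc, Ne, Nat.descFactorial_eq_zero_iff_lt]
      omega
    exact_mod_cast this) hmem

lemma strip_one (j k : Fin n) (hjk : j ≠ k) (h : MvPolynomial (Fin n) ℂ)
    (hh : pderiv j h = 0) (hju : der n 1 j ∈ G n)
    (hmem : der n ((X j : MvPolynomial (Fin n) ℂ) ^ 2 * h) k ∈ G n) : der n h k ∈ G n := by
  have hb := (G n).lie_mem hju hmem
  rw [bracket_der] at hb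
  have e1 : ((X j : MvPolynomial (Fin n) ℂ) ^ 2 * h) * pderiv k (1 : MvPolynomial (Fin n) ℂ)
      = 0 := by rw [pderiv_one, mul_zero]
  have e2 : (1 : MvPolynomial (Fin n) ℂ) * pderiv j ((X j : MvPolynomial (Fin n) ℂ)^2 * h)
      = X j * h + X j * h := by
    rw [one_mul, pderiv_mul, hh, pderiv_pow, pderiv_X_self]; ring
  rw [e1, der_zero, sub_zero, e2, der_add] at hb
  have hb2 : der n ((X j : MvPolynomial (Fin n) ℂ) * h) k ∈ G n :=
    mem_of_smul_mem (2:ℂ) two_ne_zero (by rw [two_smul]; exact hb)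
  have hc := (G n).lie_mem hju hb2
  rw [bracket_der] at hc
  have e3 : (1 : MvPolynomial (Fin n) ℂ) * pderiv j ((X j : MvPolynomial (Fin n) ℂ) * h)
      = h := by rw [one_mul, pderiv_mul, hh, pderiv_X_self]; ring
  have e4 : ((X j : MvPolynomial (Fin n) ℂ) * h) * pderiv k (1 : MvPolynomial (Fin n) ℂ)
      = 0 := by rw [pderiv_one, mul_zero]
  rwa [e3, e4, der_zero, sub_zero] at hc

lemma strip_prod (k : Fin n) (h : MvPolynomial (Fin n) ℂ) :
    ∀ s : Finset (Fin n), (∀ j ∈ s, j ≠ k ∧ der n 1 j ∈ G n) → (∀ j ∈ s, pderiv j h = 0) →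
      der n ((∏ j ∈ s, (X j : MvPolynomial (Fin n) ℂ)^2) * h) k ∈ G n → der n h k ∈ G n := by
  classical
  intro s
  induction s using Finset.induction_on with
  | empty => intro _ _ hmem; simpa using hmem
  | @insert j s' hj ih =>
      intro hs hh hmem
      have hmem' : der n ((X j : MvPolynomial (Fin n) ℂ)^2 *
          ((∏ j' ∈ s', (X j' : MvPolynomial (Fin n) ℂ)^2) * h)) k ∈ G n := by
        rw [Finset.prod_insert hj, mul_assoc] at hmem; exact hmem
      have hpd' : pderiv j ((∏ j' ∈ s', (X j' : MvPolynomial (Fin n) ℂ)^2) * h) = 0 := by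
        rw [pderiv_mul, pderiv_prod_pow _ _ _ hj, hh j (Finset.mem_insert_self _ _)]; ring
      have h2 := strip_one j k (hs j (Finset.mem_insert_self _ _)).1 _ hpd'
        (hs j (Finset.mem_insert_self _ _)).2 hmem'
      exact ih (fun a ha => hs a (Finset.mem_insert_of_mem ha))
        (fun a ha => hh a (Finset.mem_insert_of_mem ha)) h2

lemma U_eq (hn : 0 < n) : U n = der n 1 (⟨n-1, by omega⟩ : Fin n) := by
  apply derivation_ext
  intro i
  rw [U, mkDerivation_X, der_X]
  by_cases hi : (i:ℕ) = n - 1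
  · rw [if_pos hi, if_pos (Fin.ext hi)]
  · rw [if_neg hi, if_neg (fun hc => hi (by rw [hc]))]

lemma one_mem_aux : ∀ (d : ℕ) (k : Fin n), n - 1 - (k:ℕ) ≤ d → der n 1 k ∈ G n := by
  intro d
  induction d with
  | zero =>
      intro k hk
      have hkv : (k:ℕ) = n - 1 := by have := k.isLt; omega
      have hk2 : k = (⟨n-1, by have := k.isLt; omega⟩ : Fin n) := Fin.ext hkv
      rw [hk2, ← U_eq (by have := k.isLt; omega)]
      exact U_mem
  | succ d ih =>
      intro k hk
      by_cases hkn : (k:ℕ) = n - 1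
      · have hk2 : k = (⟨n-1, by have := k.isLt; omega⟩ : Fin n) := Fin.ext hkn
        rw [hk2, ← U_eq (by have := k.isLt; omega)]
        exact U_mem
      · have hk1 : (k:ℕ) + 1 < n := by have := k.isLt; omega
        have hpd : ∀ j : Fin n, (k:ℕ) < (j:ℕ) → der n 1 j ∈ G n := fun j hj =>
          ih j (by omega)
        have hseed := seed_V' k hk1 0 (by omega) hpd
        rw [pow_zero] at hseed
        refine strip_prod k 1 _ (fun j hj => ?_) (fun j hj => pderiv_one) hseed
        rw [Finset.mem_filter] at hj
        refine ⟨fun hc => ?_, ih j (by have := hj.2; omega)⟩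
        · rw [hc] at hj; omega
      
lemma one_mem (k : Fin n) : der n 1 k ∈ G n := one_mem_aux (n - 1 - (k:ℕ)) k le_rfl

lemma adjp_small (k : Fin n) (hk : (k:ℕ)+1 < n) (e : ℕ) (he : e ≤ 2) :
    der n ((X (⟨(k:ℕ)+1, hk⟩ : Fin n) : MvPolynomial (Fin n) ℂ) ^ e) k ∈ G n := by
  have hseed := seed_V' k hk e he (fun j _ => one_mem j)
  refine strip_prod k _ _ (fun j hj => ?_) (fun j hj => ?_) hseed
  · rw [Finset.mem_filter] at hj
    exact ⟨fun hc => by rw [hc] at hj; omega, one_mem j⟩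
  · rw [Finset.mem_filter] at hj
    rw [pderiv_pow, pderiv_X_of_ne (by
      intro hc
      rw [← hc] at hj
      simp at hj)]
    ring

lemma adjm_small (k : Fin n) (hk0 : 0 < (k:ℕ)) (e : ℕ) (he : e ≤ 2) :
    der n ((X (⟨(k:ℕ)-1, lt_of_le_of_lt (Nat.sub_le _ _) k.isLt⟩ : Fin n) :
      MvPolynomial (Fin n) ℂ) ^ e) k ∈ G n := by
  have hseed := seed_V'' k hk0 e he (fun j _ => one_mem j)
  refine strip_prod k _ _ (fun j hj => ?_) (fun j hj => ?_) hseed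
  · rw [Finset.mem_filter] at hj
    refine ⟨fun hc => ?_, one_mem j⟩
    rw [hc] at hj
    omega
  · rw [Finset.mem_filter] at hj
    rw [pderiv_pow, pderiv_X_of_ne (by
      intro hc
      rw [← hc] at hj
      simp at hj)]
    ring

lemma adj_pows (j k : Fin n) (hadj : (j:ℕ) = (k:ℕ)+1 ∨ (j:ℕ)+1 = (k:ℕ)) (e : ℕ) (he : e ≤ 2) :
    der n ((X j : MvPolynomial (Fin n) ℂ) ^ e) k ∈ G n := by
  rcases hadj with h | h
  · have hk1 : (k:ℕ)+1 < n := by rw [← h]; exact j.isLt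
    have hj : j = (⟨(k:ℕ)+1, hk1⟩ : Fin n) := Fin.ext h
    rw [hj]; exact adjp_small k hk1 e he
  · have hk0 : 0 < (k:ℕ) := by omega
    have hj : j = (⟨(k:ℕ)-1, lt_of_le_of_lt (Nat.sub_le _ _) k.isLt⟩ : Fin n) :=
      Fin.ext (show (j:ℕ) = (k:ℕ)-1 by omega)
    rw [hj]; exact adjm_small k hk0 e he

lemma raise (j k : Fin n) (hjk : j ≠ k) (a : ℕ) (ha : 1 ≤ a)
    (h2 : der n ((X j : MvPolynomial (Fin n) ℂ)^2) k ∈ G n)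
    (hXk : der n (X k) j ∈ G n)
    (hind : der n ((X j : MvPolynomial (Fin n) ℂ)^a) k ∈ G n) :
    der n ((X j : MvPolynomial (Fin n) ℂ)^(a+1)) k ∈ G n := by
  have hG1 : ⁅der n ((X j : MvPolynomial (Fin n) ℂ)^a) k, der n (X k) j⁆ =
      der n ((X j : MvPolynomial (Fin n) ℂ)^a) j -
        ((a:ℂ) • der n ((X k : MvPolynomial (Fin n) ℂ) * X j ^ (a-1)) k) := by
    rw [bracket_der]
    have e1 : (X j : MvPolynomial (Fin n) ℂ)^a * pderiv k (X k) = X j ^ a := by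
      rw [pderiv_X_self, mul_one]
    have e2 : (X k : MvPolynomial (Fin n) ℂ) * pderiv j (X j ^ a) =
        (a:ℂ) • ((X k : MvPolynomial (Fin n) ℂ) * X j ^ (a-1)) := by
      rw [pderiv_pow, pderiv_X_self, smul_eq_C_mul, map_natCast]; ring
    rw [e1, e2, der_smul]
  have hM1 : der n ((X j : MvPolynomial (Fin n) ℂ)^a) j -
      ((a:ℂ) • der n ((X k : MvPolynomial (Fin n) ℂ) * X j ^ (a-1)) k) ∈ G n := by
    rw [← hG1]; exact (G n).lie_mem hind hXk
  have hM2 := (G n).lie_mem h2 hM1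
  rw [lie_sub, lie_smul (a:ℂ) (der n ((X j : MvPolynomial (Fin n) ℂ)^2) k)
    (der n ((X k : MvPolynomial (Fin n) ℂ) * X j ^ (a-1)) k), bracket_der, bracket_der] at hM2
  have e3 : (X j : MvPolynomial (Fin n) ℂ)^2 * pderiv k (X j ^ a) = 0 := by
    rw [pderiv_pow, pderiv_X_of_ne hjk]; ring
  have e4 : (X j : MvPolynomial (Fin n) ℂ)^a * pderiv j (X j ^ 2) =
      (2:ℂ) • ((X j : MvPolynomial (Fin n) ℂ) ^ (a+1)) := by
    rw [pderiv_pow, pderiv_X_self, smul_eq_C_mul, map_ofNat]; ring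
  have e5 : (X j : MvPolynomial (Fin n) ℂ)^2 * pderiv k (X k * X j ^ (a-1)) =
      (X j : MvPolynomial (Fin n) ℂ) ^ (a+1) := by
    rw [pderiv_mul, pderiv_X_self, pderiv_pow, pderiv_X_of_ne hjk]
    have : (X j : MvPolynomial (Fin n) ℂ)^2 * X j ^ (a-1) = X j ^ (a+1) := by
      rw [← pow_add]; congr 1; omega
    calc (X j : MvPolynomial (Fin n) ℂ)^2 *
        (1 * X j ^ (a-1) + X k * (↑(a-1) * X j ^ (a-1-1) * 0)) =
        (X j : MvPolynomial (Fin n) ℂ)^2 * X j ^ (a-1) := by ring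
      _ = X j ^ (a+1) := this
  have e6 : (X k : MvPolynomial (Fin n) ℂ) * X j ^ (a-1) * pderiv k (X j ^ 2) = 0 := by
    rw [pderiv_pow, pderiv_X_of_ne hjk]; ring
  rw [e3, e4, e5, e6, der_zero, der_zero, zero_sub, sub_zero, der_smul] at hM2
  have hfin : -((2:ℂ) • der n ((X j : MvPolynomial (Fin n) ℂ)^(a+1)) k) -
      (a:ℂ) • der n ((X j : MvPolynomial (Fin n) ℂ)^(a+1)) k =
      (-((a:ℂ)+2)) • der n ((X j : MvPolynomial (Fin n) ℂ)^(a+1)) k := by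
    module
  rw [hfin] at hM2
  refine mem_of_smul_mem (-((a:ℂ)+2)) ?_ hM2
  have : ((a:ℂ)+2) = ((a+2 : ℕ) : ℂ) := by push_cast; ring
  rw [this]
  simp only [ne_eq, neg_eq_zero, Nat.cast_eq_zero]
  omega

lemma transport (j l k : Fin n) (hjl : j ≠ l) (hlk : l ≠ k) (hjk : j ≠ k) (a : ℕ)
    (h1 : der n ((X j : MvPolynomial (Fin n) ℂ)^a) l ∈ G n)
    (h2 : der n (X l) k ∈ G n) : der n ((X j : MvPolynomial (Fin n) ℂ)^a) k ∈ G n := by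
  have hb := (G n).lie_mem h1 h2
  rw [bracket_der] at hb
  have e1 : (X j : MvPolynomial (Fin n) ℂ)^a * pderiv l (X l) = X j ^ a := by
    rw [pderiv_X_self, mul_one]
  have e2 : (X l : MvPolynomial (Fin n) ℂ) * pderiv k (X j ^ a) = 0 := by
    rw [pderiv_pow, pderiv_X_of_ne hjk]; ring
  rwa [e1, e2, der_zero, sub_zero] at hb

lemma adj_full (j k : Fin n) (hadj : (j:ℕ) = (k:ℕ)+1 ∨ (j:ℕ)+1 = (k:ℕ)) (a : ℕ) :
    der n ((X j : MvPolynomial (Fin n) ℂ) ^ a) k ∈ G n := by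
  have hjk : j ≠ k := by
    intro hc
    rw [hc] at hadj
    omega
  induction a with
  | zero => rw [pow_zero]; exact one_mem k
  | succ a ih =>
      by_cases ha0 : a = 0
      · subst ha0
        exact adj_pows j k hadj 1 (by omega)
      · refine raise j k hjk a (by omega) (adj_pows j k hadj 2 le_rfl) ?_ ih
        have := adj_pows k j (by omega) 1 (by omega)
        rwa [pow_one] at this

lemma single_aux : ∀ (d : ℕ) (j k : Fin n), ((j:ℕ)+d = (k:ℕ) ∨ (k:ℕ)+d = (j:ℕ)) → 1 ≤ d →
    ∀ a, der n ((X j : MvPolynomial (Fin n) ℂ) ^ a) k ∈ G n := by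
  intro d
  induction d with
  | zero => intro _ _ _ h1; omega
  | succ d ih =>
      intro j k hd _ a
      by_cases hd0 : d = 0
      · subst hd0
        exact adj_full j k (by omega) a
      · rcases hd with h | h
        · have hk0 : 0 < (k:ℕ) := by omega
          set l : Fin n := ⟨(k:ℕ)-1, lt_of_le_of_lt (Nat.sub_le _ _) k.isLt⟩ with hl
          have hlv : (l:ℕ) = (k:ℕ) - 1 := rfl
          have h1 : der n ((X j : MvPolynomial (Fin n) ℂ)^a) l ∈ G n :=
            ih j l (Or.inl (by omega)) (by omega) a
          have h2 : der n (X l) k ∈ G n := by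
            have := adj_pows l k (Or.inr (by omega)) 1 (by omega)
            rwa [pow_one] at this
          exact transport j l k (by intro hc; rw [hc] at h; omega)
            (by intro hc; rw [hc] at hlv; omega)
            (by intro hc; rw [hc] at h; omega) a h1 h2
        · have hk1 : (k:ℕ)+1 < n := by have := j.isLt; omega
          set l : Fin n := ⟨(k:ℕ)+1, hk1⟩ with hl
          have hlv : (l:ℕ) = (k:ℕ) + 1 := rfl
          have h1 : der n ((X j : MvPolynomial (Fin n) ℂ)^a) l ∈ G n :=
            ih j l (Or.inr (by omega)) (by omega) a
          have h2 : der n (X l) k ∈ G n := by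
            have := adj_pows l k (Or.inl (by omega)) 1 (by omega)
            rwa [pow_one] at this
          exact transport j l k (by intro hc; rw [hc] at h; omega)
            (by intro hc; rw [hc] at hlv; omega)
            (by intro hc; rw [hc] at h; omega) a h1 h2

lemma single (j k : Fin n) (hjk : j ≠ k) (a : ℕ) :
    der n ((X j : MvPolynomial (Fin n) ℂ) ^ a) k ∈ G n := by
  have hv : (j:ℕ) ≠ (k:ℕ) := fun h => hjk (Fin.ext h)
  rcases lt_or_gt_of_ne hv with h | h
  · exact single_aux ((k:ℕ)-(j:ℕ)) j k (Or.inl (by omega)) (by omega) a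
  · exact single_aux ((j:ℕ)-(k:ℕ)) j k (Or.inr (by omega)) (by omega) a

lemma mono : ∀ (s : Finset (Fin n)) (a : Fin n → ℕ) (k : Fin n), k ∉ s →
    der n (∏ j ∈ s, (X j : MvPolynomial (Fin n) ℂ) ^ a j) k ∈ G n := by
  classical
  intro s
  induction s using Finset.induction_on with
  | empty => intro a k _; simpa using one_mem k
  | @insert j s' hj ih =>
      intro a k hk
      have hjk : j ≠ k := fun h => hk (h ▸ Finset.mem_insert_self j s')
      have hks' : k ∉ s' := fun h => hk (Finset.mem_insert_of_mem h)
      have hm' : der n (∏ j' ∈ s', (X j' : MvPolynomial (Fin n) ℂ) ^ a j') j ∈ G n := ih a j hj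
      have hx : der n ((X j : MvPolynomial (Fin n) ℂ) ^ (a j + 1)) k ∈ G n :=
        single j k hjk (a j + 1)
      have hb := (G n).lie_mem hm' hx
      rw [bracket_der] at hb
      have e1 : (∏ j' ∈ s', (X j' : MvPolynomial (Fin n) ℂ) ^ a j') *
          pderiv j ((X j : MvPolynomial (Fin n) ℂ) ^ (a j + 1)) =
          ((a j + 1 : ℕ) : ℂ) • ((∏ j' ∈ s', (X j' : MvPolynomial (Fin n) ℂ) ^ a j') *
            (X j : MvPolynomial (Fin n) ℂ) ^ a j) := by
        rw [pderiv_pow, pderiv_X_self, Nat.add_sub_cancel, smul_eq_C_mul, map_natCast]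
        ring
      have e2 : (X j : MvPolynomial (Fin n) ℂ) ^ (a j + 1) *
          pderiv k (∏ j' ∈ s', (X j' : MvPolynomial (Fin n) ℂ) ^ a j') = 0 := by
        rw [pderiv_prod_pow _ _ _ hks', mul_zero]
      rw [e1, e2, der_zero, sub_zero, der_smul] at hb
      have hD := mem_of_smul_mem ((a j + 1 : ℕ) : ℂ)
        (by exact_mod_cast (Nat.succ_ne_zero (a j))) hb
      rw [Finset.prod_insert hj, mul_comm]
      exact hD

lemma der_sum {α : Type*} (s : Finset α) (F : α → MvPolynomial (Fin n) ℂ) (k : Fin n) :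
    der n (∑ i ∈ s, F i) k = ∑ i ∈ s, der n (F i) k := by
  classical
  induction s using Finset.induction_on with
  | empty => simpa using der_zero k
  | @insert j s' hj ih => rw [Finset.sum_insert hj, Finset.sum_insert hj, der_add, ih]

lemma support_of_pderiv_zero (f : MvPolynomial (Fin n) ℂ) (k : Fin n)
    (hf : pderiv k f = 0) : ∀ a ∈ f.support, a k = 0 := by
  classical
  intro a ha
  by_contra hak
  have hco : coeff (a - Finsupp.single k 1) (pderiv k f) = 0 := by rw [hf]; simp
  have hrep : pderiv k f = ∑ v ∈ f.support,
      monomial (v - Finsupp.single k 1) (coeff v f * v k) := by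
    conv_lhs => rw [← support_sum_monomial_coeff f]
    rw [map_sum]
    exact Finset.sum_congr rfl (fun v _ => pderiv_monomial)
  rw [hrep, coeff_sum] at hco
  rw [Finset.sum_eq_single a (fun v hv hva => ?_) (fun hna => absurd ha hna)] at hco
  · rw [coeff_monomial, if_pos rfl] at hco
    exact (mul_ne_zero (mem_support_iff.mp ha) (Nat.cast_ne_zero.mpr hak)) hco
  · rw [coeff_monomial]
    split
    · rename_i hcase
      by_cases hvk : v k = 0
      · rw [hvk, Nat.cast_zero, mul_zero]
      · exfalso
        apply hva
        ext i
        have hci := DFunLike.congr_fun hcase i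
        rw [Finsupp.tsub_apply, Finsupp.tsub_apply] at hci
        by_cases hik : i = k
        · subst hik
          rw [Finsupp.single_apply, if_pos rfl] at hci
          omega
        · rw [Finsupp.single_apply, if_neg (fun hc => hik hc.symm)] at hci
          omega
    · rfl

theorem main (hn : 2 ≤ n) (k : Fin n) (f : MvPolynomial (Fin n) ℂ)
    (hf : MvPolynomial.pderiv k f = 0) : der n f k ∈ G n := by
  classical
  have hsupp := support_of_pderiv_zero f k hf
  have hrep : f = ∑ a ∈ f.support, monomial a (coeff a f) :=
    (support_sum_monomial_coeff f).symm
  rw [hrep, der_sum]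
  refine sum_mem (fun a ha => ?_)
  have h0 : k ∉ a.support := fun hmem => (Finsupp.mem_support_iff.mp hmem) (hsupp a ha)
  have hmon : (monomial a (coeff a f) : MvPolynomial (Fin n) ℂ) =
      (coeff a f) • ∏ j ∈ a.support, (X j : MvPolynomial (Fin n) ℂ) ^ a j := by
    rw [monomial_eq, smul_eq_C_mul]
    rfl
  rw [hmon, der_smul]
  exact (G n).smul_mem _ (mono a.support (fun j => a j) k h0)

end ShearGen

/-- For every `n ≥ 2`, every `k`, and every polynomial `f` with `∂f/∂zₖ = 0`, the shear
field `f ∂/∂zₖ` lies in the smallest Lie subalgebra of the derivations of `ℂ[z₁,…,zₙ]`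
containing `U`, `V′`, `V″`. -/
theorem shear_mem_lieSpan_UV'V'' (n : ℕ) (hn : 2 ≤ n) (k : Fin n)
    (f : MvPolynomial (Fin n) ℂ) (hf : MvPolynomial.pderiv k f = 0) :
    der n f k ∈
      LieSubalgebra.lieSpan ℂ (Derivation ℂ (MvPolynomial (Fin n) ℂ) (MvPolynomial (Fin n) ℂ))
        {U n, V' n, V'' n} := by
  exact ShearGen.main hn k f hf
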